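/- Consider the two-term chain complex 0 → V --Δ--> V⊗V → 0 with V in degree 0. Its degree-0 cohomology Ker(Δ) is zero, and its degree-1 cohomology Coker(Δ) is a free abelian group of rank 2, isomorphic to V as an abelian group. -/

import Mathlib

open TensorProduct

noncomputable section

abbrev V : Type := ℤ × ℤ

def e1 : V := (1, 0)
def eX : V := (0, 1)

def mulB : V →ₗ[ℤ] V →ₗ[ℤ] V :=
  LinearMap.mk₂ ℤ (fun x y => (x.1 * y.1, x.1 * y.2 + x.2 * y.1))
    (fun x x' y => by ext <;> simp <;> ring)
    (fun r x y => by ext <;> simp <;> ring)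
    (fun x y y' => by ext <;> simp <;> ring)
    (fun r x y => by ext <;> simp <;> ring)

def mV : V ⊗[ℤ] V →ₗ[ℤ] V := TensorProduct.lift mulB

def ΔV : V →ₗ[ℤ] V ⊗[ℤ] V :=
  (LinearMap.fst ℤ ℤ ℤ).smulRight (e1 ⊗ₜ[ℤ] eX + eX ⊗ₜ[ℤ] e1) +
  (LinearMap.snd ℤ ℤ ℤ).smulRight (eX ⊗ₜ[ℤ] eX)

def εV : V →ₗ[ℤ] ℤ := LinearMap.snd ℤ ℤ ℤ
def ιV : ℤ →ₗ[ℤ] V := LinearMap.inl ℤ ℤ ℤ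

/-- For the complex `0 → V --Δ--> V⊗V → 0` (with `V` in degree 0), the degree-0
cohomology `Ker(Δ)` vanishes and the degree-1 cohomology `Coker(Δ)` is free abelian
of rank 2, isomorphic to `V` as an abelian group. -/
def FV : V ⊗[ℤ] V →ₗ[ℤ] V := TensorProduct.lift <|
  LinearMap.mk₂ ℤ (fun x y => (x.2 * y.1, x.2 * y.2))
    (fun x x' y => by ext <;> simp <;> ring)
    (fun r x y => by ext <;> simp <;> ring)
    (fun x y y' => by ext <;> simp <;> ring)
    (fun r x y => by ext <;> simp <;> ring)
def GV : V ⊗[ℤ] V →ₗ[ℤ] V := TensorProduct.lift <|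
  LinearMap.mk₂ ℤ (fun x y => (x.1 * y.1, x.1 * y.2 - x.2 * y.1))
    (fun x x' y => by ext <;> simp <;> ring)
    (fun r x y => by ext <;> simp <;> ring)
    (fun x y y' => by ext <;> simp <;> ring)
    (fun r x y => by ext <;> simp <;> ring)
def QV : V →ₗ[ℤ] V ⊗[ℤ] V :=
  (LinearMap.fst ℤ ℤ ℤ).smulRight (e1 ⊗ₜ[ℤ] e1) +
  (LinearMap.snd ℤ ℤ ℤ).smulRight (e1 ⊗ₜ[ℤ] eX)

lemma FΔ : FV.comp ΔV = LinearMap.id := by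
  ext v <;> erw [LinearMap.comp_apply] <;> simp [FV, ΔV, e1, eX]

lemma GΔ : GV.comp ΔV = 0 := by
  ext v <;> erw [LinearMap.comp_apply] <;> simp [GV, ΔV, e1, eX]

lemma decomp : ΔV.comp FV + QV.comp GV = LinearMap.id := by
  apply TensorProduct.ext'
  intro x y
  change ΔV ((x.2 * y.1, x.2 * y.2) : V) + QV ((x.1 * y.1, x.1 * y.2 - x.2 * y.1) : V) = x ⊗ₜ[ℤ] y
  have hx : x = x.1 • e1 + x.2 • eX := by simp [e1, eX]
  have hy : y = y.1 • e1 + y.2 • eX := by simp [e1, eX]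
  simp only [LinearMap.add_apply, LinearMap.comp_apply, LinearMap.id_apply, FV, GV,
    TensorProduct.lift.tmul, LinearMap.mk₂_apply, ΔV, QV, LinearMap.coe_smulRight,
    LinearMap.fst_apply, LinearMap.snd_apply]
  rw [show (x ⊗ₜ[ℤ] y) = (x.1 • e1 + x.2 • eX) ⊗ₜ[ℤ] (y.1 • e1 + y.2 • eX) by
    rw [← hx, ← hy]]
  simp only [tmul_add, add_tmul, ← smul_tmul', tmul_smul, smul_smul, sub_smul, smul_sub,
    smul_add, add_smul]
  module

lemma Gsurj : Function.Surjective GV := by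
  intro v
  exact ⟨v.1 • e1 ⊗ₜ[ℤ] e1 + v.2 • e1 ⊗ₜ[ℤ] eX, by rw [map_add, map_smul, map_smul]; change v.1 • ((1 * 1, 1 * 0 - 0 * 1) : V) + v.2 • ((1 * 0, 1 * 1 - 0 * 0) : V) = v; ext <;> simp⟩

lemma kerG : LinearMap.ker GV = LinearMap.range ΔV := by
  apply le_antisymm
  · intro t ht
    have h := congrFun (congrArg (fun f => f.toFun) decomp) t
    simp only [LinearMap.toFun_eq_coe, LinearMap.add_apply, LinearMap.comp_apply, LinearMap.id_apply] at h ⊢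
    rw [LinearMap.mem_ker] at ht
    exact ⟨FV t, by
      have : GV t = 0 := ht
      simpa [this] using h⟩
  · rintro t ⟨v, rfl⟩
    rw [LinearMap.mem_ker, ← LinearMap.comp_apply, GΔ]
    rfl


/-- main -/
theorem cohomology_of_comult_complex :
    LinearMap.ker ΔV = ⊥ ∧
    Nonempty (((V ⊗[ℤ] V) ⧸ LinearMap.range ΔV) ≃ₗ[ℤ] V) := by
  constructor
  · rw [LinearMap.ker_eq_bot]
    intro a b h
    have := congrArg FV h
    simpa [← LinearMap.comp_apply, FΔ] using this
  · exact ⟨kerG ▸ GV.quotKerEquivOfSurjective Gsurj⟩
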